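/- Let t be a D-tree with a colouring Col : t → C into a finite set C ⊂ ℕ. The set of branches of t satisfying the parity condition is large if and only if there exists a valid local-strategy (φ_f, φ_n) on t such that every (φ_f, φ_n)-compatible branch satisfies the parity condition. Moreover, (φ_f, φ_n) can be chosen so that φ_f(u₁) = φ_f(u₂) and φ_n(u₁) = φ_n(u₂) whenever the coloured subtrees t[u₁] and t[u₂] are equal. -/

import Mathlib

/-- A `D`-tree: a prefix-closed set of finite words over `D` containing the root
and in which every node has at least one child. -/
structure DTree (D : Type) where
  nodes : Set (List D)
  root_mem : ([] : List D) ∈ nodes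
  prefix_closed : ∀ ⦃u v : List D⦄, u <+: v → v ∈ nodes → u ∈ nodes
  no_leaf : ∀ u ∈ nodes, ∃ d, u ++ [d] ∈ nodes

/-- The prefix of length `n` of the infinite word `b`. -/
def listPref {D : Type} (b : ℕ → D) (n : ℕ) : List D :=
  List.ofFn (fun j : Fin n => b j.1)

/-- `b` is a branch of the tree `t`: all of its finite prefixes are nodes of `t`. -/
def IsBranch {D : Type} (t : DTree D) (b : ℕ → D) : Prop :=
  ∀ n, listPref b n ∈ t.nodes

/-- A set `B` of branches is nowhere dense in `t`: every node of `t` has a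
descendant in `t` lying on no branch of `B`. -/
def NowhereDenseT {D : Type} (t : DTree D) (B : Set (ℕ → D)) : Prop :=
  ∀ u ∈ t.nodes, ∃ v ∈ t.nodes, u <+: v ∧ ∀ b ∈ B, listPref b v.length ≠ v

/-- A set of branches is meager in `t`: a countable union of nowhere dense sets. -/
def MeagerT {D : Type} (t : DTree D) (B : Set (ℕ → D)) : Prop :=
  ∃ f : ℕ → Set (ℕ → D), (∀ n, NowhereDenseT t (f n)) ∧ B ⊆ ⋃ n, f n

/-- A set of branches is large in `t`: its complement (within the set of branches
of `t`) is meager. -/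
def LargeT {D : Type} (t : DTree D) (B : Set (ℕ → D)) : Prop :=
  MeagerT t ({b | IsBranch t b} \ B)

/-- A set `W` of nodes is dense in `t`: every node of `t` has a descendant in `W`. -/
def DenseN {D : Type} (t : DTree D) (W : Set (List D)) : Prop :=
  ∀ u ∈ t.nodes, ∃ v ∈ W, u <+: v

/-- `B(W)`: the set of branches of `t` having infinitely many prefixes in `W`. -/
def BranchesThru {D : Type} (t : DTree D) (W : Set (List D)) : Set (ℕ → D) :=
  {b | IsBranch t b ∧ {n | listPref b n ∈ W}.Infinite}

/-- The topology on the set of branches of `t` generated by the cones. -/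
def branchTopology {D : Type} (t : DTree D) : TopologicalSpace {b : ℕ → D // IsBranch t b} :=
  TopologicalSpace.generateFrom
    {s | ∃ u ∈ t.nodes, s = {b : {b : ℕ → D // IsBranch t b} | listPref b.1 u.length = u}}

/-- The direction mapping `d` points to `W`: from every node `u` of `t`, following
`d` leads (in finitely many steps) to a node of `W`. -/
def PointsTo {D : Type} (t : DTree D) (d : List D → D) (W : Set (List D)) : Prop :=
  ∀ u ∈ t.nodes, ∃ l : List D, u ++ l ∈ W ∧
    ∀ i : Fin l.length, l.get i = d (u ++ l.take i.1)
/-- The branch `b` satisfies the parity condition: the least colour occurring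
infinitely often along its nodes is even. -/
def ParityBranch {D : Type} (col : List D → ℕ) (b : ℕ → D) : Prop :=
  Even (sInf {c | {n | col (listPref b n) = c}.Infinite})

/-- Following `φ` from `u` leads to `v`: `v` is obtained from `u` by following the
direction components of `φ`, and the flag of `φ` at `v` is `⊤`. -/
def Follows {D : Type} (φ : List D → D × Bool) (u v : List D) : Prop :=
  ∃ l : List D, v = u ++ l ∧ (∀ i : Fin l.length, l.get i = (φ (u ++ l.take i.1)).1) ∧
    (φ v).2 = true

/-- `v` is the shortest node reached from `u` by following `φ` whose flag is `⊤`. -/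
def FollowsShortest {D : Type} (φ : List D → D × Bool) (u v : List D) : Prop :=
  ∃ l : List D, v = u ++ l ∧ (∀ i : Fin l.length, l.get i = (φ (u ++ l.take i.1)).1) ∧
    (φ v).2 = true ∧ ∀ l' : List D, l' <+: l → l' ≠ l → (φ (u ++ l')).2 = false

/-- A valid local-strategy: both maps always point at a child present in the tree
and, from every node, following each of them eventually reaches a `⊤`-flagged
node. -/
def ValidLS {D : Type} (t : DTree D) (φf φn : List D → D × Bool) : Prop :=
  (∀ u ∈ t.nodes, u ++ [(φf u).1] ∈ t.nodes ∧ u ++ [(φn u).1] ∈ t.nodes) ∧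
  (∀ u ∈ t.nodes, ∃ v, Follows φf u v) ∧
  (∀ u ∈ t.nodes, ∃ v, Follows φn u v)

/-- A `(φf, φn)`-compatible branch: obtained by repeatedly selecting an arbitrary
node strictly below the previously reached node and then following `φf` (in the
first round) resp. `φn` (in the later rounds) to the shortest `⊤`-flagged node. -/
def CompatibleBranch {D : Type} (φf φn : List D → D × Bool) (b : ℕ → D) : Prop :=
  ∃ u v : ℕ → List D,
    (∀ n, listPref b (u n).length = u n) ∧ (∀ n, listPref b (v n).length = v n) ∧
    FollowsShortest φf (u 0) (v 0) ∧
    (∀ n, FollowsShortest φn (u (n + 1)) (v (n + 1))) ∧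
    (∀ n, v n <+: u (n + 1) ∧ v n ≠ u (n + 1))

/-- The coloured subtrees of `t` rooted at `u₁` and `u₂` are equal. -/
def SubtreeEq {D : Type} (t : DTree D) (col : List D → ℕ) (u₁ u₂ : List D) : Prop :=
  (∀ w : List D, u₁ ++ w ∈ t.nodes ↔ u₂ ++ w ∈ t.nodes) ∧
  (∀ w : List D, u₁ ++ w ∈ t.nodes → col (u₁ ++ w) = col (u₂ ++ w))

/-- `C(u)`: the set of colours of nodes of `t` reachable from `u`. -/
def ColorsFrom {D : Type} (t : DTree D) (col : List D → ℕ) (u : List D) : Set ℕ :=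
  {c | ∃ v ∈ t.nodes, u <+: v ∧ col v = c}

/-- A stable node of `t`: all its descendants have the same set of reachable
colours as itself. -/
def StableNode {D : Type} (t : DTree D) (col : List D → ℕ) (u : List D) : Prop :=
  u ∈ t.nodes ∧ ∀ w ∈ t.nodes, u <+: w → ColorsFrom t col w = ColorsFrom t col u
namespace Stmt12Aux

variable {D : Type}

/-! ### listPref lemmas -/

theorem length_listPref (b : ℕ → D) (n : ℕ) : (listPref b n).length = n :=
  List.length_ofFn

theorem getElem_listPref (b : ℕ → D) (n k : ℕ) (h : k < (listPref b n).length) :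
    (listPref b n)[k] = b k := by
  simp [listPref]

theorem take_listPref (b : ℕ → D) {m n : ℕ} (h : m ≤ n) :
    (listPref b n).take m = listPref b m := by
  apply List.ext_getElem
  · simp [length_listPref, h]
  · intro k h1 h2
    rw [List.getElem_take, getElem_listPref, getElem_listPref]

theorem listPref_prefix (b : ℕ → D) {m n : ℕ} (h : m ≤ n) :
    listPref b m <+: listPref b n := by
  rw [List.prefix_iff_eq_take, length_listPref, take_listPref b h]

theorem eq_listPref_of_prefix {b : ℕ → D} {x : List D} {n : ℕ}
    (h : x <+: listPref b n) : listPref b x.length = x := by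
  have hlen : x.length ≤ n := by
    have := h.length_le; rwa [length_listPref] at this
  rw [← take_listPref b hlen, ← List.prefix_iff_eq_take.mp h]

/-! ### chains and limits -/

theorem chain_prefix {v : ℕ → List D} (h : ∀ n, v n <+: v (n + 1)) :
    ∀ {m n : ℕ}, m ≤ n → v m <+: v n := by
  intro m n hmn
  induction n with
  | zero => rw [Nat.le_zero.mp hmn]
  | succ n ih =>
    rcases eq_or_lt_of_le hmn with h' | h'
    · rw [h']
    · exact (ih (Nat.lt_succ_iff.mp h')).trans (h n)

theorem exists_chain {α : Type*} (Inv : α → Prop) (P : ℕ → α → α → Prop)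
    (w0 : α) (h0 : Inv w0) (hstep : ∀ n w, Inv w → ∃ w', Inv w' ∧ P n w w') :
    ∃ v : ℕ → α, v 0 = w0 ∧ (∀ n, Inv (v n)) ∧ ∀ n, P n (v n) (v (n + 1)) := by
  choose F hF1 hF2 using hstep
  let g : ℕ → {w : α // Inv w} := fun n =>
    Nat.rec ⟨w0, h0⟩ (fun n p => ⟨F n p.1 p.2, hF1 n p.1 p.2⟩) n
  exact ⟨fun n => (g n).1, rfl, fun n => (g n).2, fun n => hF2 n (g n).1 (g n).2⟩

theorem exists_limit_branch (t : DTree D) {v : ℕ → List D}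
    (hchain : ∀ n, v n <+: v (n + 1)) (hlen : ∀ n, (v n).length < (v (n + 1)).length)
    (hnode : ∀ n, v n ∈ t.nodes) :
    ∃ b : ℕ → D, IsBranch t b ∧ ∀ n, listPref b (v n).length = v n := by
  obtain ⟨d0, -⟩ := t.no_leaf [] t.root_mem
  have hlen' : ∀ n, n ≤ (v n).length := by
    intro n
    induction n with
    | zero => exact Nat.zero_le _
    | succ n ih => exact Nat.succ_le_of_lt (lt_of_le_of_lt ih (hlen n))
  set b : ℕ → D := fun k => (v (k + 1)).getD k d0 with hb
  have hbk : ∀ k n (hk : k < (v n).length), b k = (v n)[k]'hk := by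
    intro k n hk
    have hk1 : k < (v (k + 1)).length := lt_of_lt_of_le (Nat.lt_succ_self k) (hlen' (k + 1))
    have h1 : b k = (v (k + 1))[k]'hk1 := List.getD_eq_getElem _ _ hk1
    rcases le_total n (k + 1) with hle | hle
    · rw [h1, (chain_prefix hchain hle).getElem hk]
    · rw [h1, (chain_prefix hchain hle).getElem hk1]
  have hpref : ∀ n, listPref b (v n).length = v n := by
    intro n
    apply List.ext_getElem
    · simp [length_listPref]
    · intro k h1 h2
      rw [getElem_listPref]
      exact hbk k n h2
  refine ⟨b, ?_, hpref⟩
  intro m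
  have hm : m ≤ (v m).length := hlen' m
  have : listPref b m <+: v m := by
    rw [← hpref m]; exact listPref_prefix b hm
  exact t.prefix_closed this (hnode m)

/-! ### basic tree lemmas -/

theorem extend_length (t : DTree D) {u : List D} (hu : u ∈ t.nodes) (m : ℕ) :
    ∃ v ∈ t.nodes, u <+: v ∧ m ≤ v.length := by
  induction m with
  | zero => exact ⟨u, hu, List.prefix_refl _, Nat.zero_le _⟩
  | succ m ih =>
    obtain ⟨v, hv, huv, hm⟩ := ih
    obtain ⟨d, hd⟩ := t.no_leaf v hv
    exact ⟨v ++ [d], hd, huv.trans (List.prefix_append _ _), by simp; omega⟩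

theorem colorsFrom_nonempty (t : DTree D) (col : List D → ℕ) {u : List D}
    (hu : u ∈ t.nodes) : (ColorsFrom t col u).Nonempty :=
  ⟨col u, u, hu, List.prefix_refl _, rfl⟩

theorem colorsFrom_anti (t : DTree D) (col : List D → ℕ) {u w : List D}
    (h : u <+: w) : ColorsFrom t col w ⊆ ColorsFrom t col u := by
  rintro c ⟨v, hv, hwv, hc⟩
  exact ⟨v, hv, h.trans hwv, hc⟩

theorem colorsFrom_subset_image (t : DTree D) (col : List D → ℕ) (u : List D) :
    ColorsFrom t col u ⊆ col '' t.nodes := by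
  rintro c ⟨v, hv, _, hc⟩
  exact ⟨v, hv, hc⟩

theorem exists_stable (t : DTree D) (col : List D → ℕ)
    (hcol : (col '' t.nodes).Finite) {u : List D} (hu : u ∈ t.nodes) :
    ∃ v ∈ t.nodes, u <+: v ∧ StableNode t col v := by
  set S : Set ℕ := {n | ∃ v ∈ t.nodes, u <+: v ∧ (ColorsFrom t col v).ncard = n} with hS
  have hSne : S.Nonempty := ⟨_, u, hu, List.prefix_refl _, rfl⟩
  obtain ⟨v, hv, huv, hcard⟩ := Nat.sInf_mem hSne
  refine ⟨v, hv, huv, hv, fun w hw hvw => ?_⟩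
  have hsub := colorsFrom_anti t col hvw
  have hvfin : (ColorsFrom t col v).Finite := hcol.subset (colorsFrom_subset_image t col v)
  have hle : sInf S ≤ (ColorsFrom t col w).ncard := Nat.sInf_le ⟨w, hw, huv.trans hvw, rfl⟩
  exact Set.eq_of_subset_of_ncard_le hsub (hcard ▸ hle) hvfin

theorem stable_mono (t : DTree D) (col : List D → ℕ) {u w : List D}
    (hst : StableNode t col u) (hw : w ∈ t.nodes) (huw : u <+: w) :
    StableNode t col w ∧ ColorsFrom t col w = ColorsFrom t col u := by
  have h1 := hst.2 w hw huw
  refine ⟨⟨hw, fun z hz hwz => ?_⟩, h1⟩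
  rw [hst.2 z hz (huw.trans hwz), h1]

theorem exists_min_node (t : DTree D) (col : List D → ℕ)
    (hcol : (col '' t.nodes).Finite) {u : List D} (hu : u ∈ t.nodes) :
    ∃ v ∈ t.nodes, u <+: v ∧ StableNode t col v ∧ col v = sInf (ColorsFrom t col v) := by
  obtain ⟨s, hs, hus, hst⟩ := exists_stable t col hcol hu
  obtain ⟨v, hv, hsv, hcv⟩ := Nat.sInf_mem (colorsFrom_nonempty t col hs)
  obtain ⟨hstv, hcoleq⟩ := stable_mono t col hst hv hsv
  exact ⟨v, hv, hus.trans hsv, hstv, by rw [hcoleq]; exact hcv⟩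

/-! ### parity computation along a branch -/

theorem parity_sInf (t : DTree D) (col : List D → ℕ) {b : ℕ → D} (hb : IsBranch t b)
    {v0 : List D} (hpre : listPref b v0.length = v0) (hst : StableNode t col v0)
    (hinf : {n | col (listPref b n) = sInf (ColorsFrom t col v0)}.Infinite) :
    sInf {c | {n | col (listPref b n) = c}.Infinite} = sInf (ColorsFrom t col v0) := by
  set c := sInf (ColorsFrom t col v0) with hc
  apply le_antisymm
  · exact Nat.sInf_le hinf
  · apply le_csInf ⟨c, hinf⟩
    intro c' hc'
    obtain ⟨n, hn, hnge⟩ := Set.Infinite.exists_gt hc' v0.length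
    have hpre' : v0 <+: listPref b n := by
      rw [← hpre]; exact listPref_prefix b hnge.le
    exact Nat.sInf_le ⟨listPref b n, hb n, hpre', hn⟩

end Stmt12Aux
namespace Stmt12Aux

variable {D : Type}

/-- The key condition: every stable node has even minimal reachable colour. -/
def EvenMin (t : DTree D) (col : List D → ℕ) : Prop :=
  ∀ u, StableNode t col u → Even (sInf (ColorsFrom t col u))

theorem large_of_evenMin (t : DTree D) (col : List D → ℕ)
    (hcol : (col '' t.nodes).Finite) (hE : EvenMin t col) :
    LargeT t {b | IsBranch t b ∧ ParityBranch col b} := by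
  classical
  set W : Set (List D) := {v | StableNode t col v ∧ col v = sInf (ColorsFrom t col v)} with hW
  refine ⟨fun k => {b | IsBranch t b ∧ ∀ n, k ≤ n → listPref b n ∉ W}, ?_, ?_⟩
  · intro k u hu
    obtain ⟨u', hu', huu', hk⟩ := extend_length t hu k
    obtain ⟨v, hv, hu'v, hstv, hcv⟩ := exists_min_node t col hcol hu'
    refine ⟨v, hv, huu'.trans hu'v, fun b hb hbv => ?_⟩
    exact hb.2 v.length (hk.trans hu'v.length_le) (by rw [hbv]; exact ⟨hstv, hcv⟩)
  · rintro b ⟨hbr, hnp⟩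
    simp only [Set.mem_iUnion]
    by_contra h
    push_neg at h
    have h' : ∀ k, ∃ n, k ≤ n ∧ listPref b n ∈ W := by
      intro k
      have hk := h k
      rw [Set.mem_setOf_eq] at hk
      push_neg at hk
      simpa using hk hbr
    set I : Set ℕ := {n | listPref b n ∈ W} with hI
    have hIinf : I.Infinite := by
      apply Set.infinite_of_forall_exists_gt
      intro a
      obtain ⟨n, hn, hnW⟩ := h' (a + 1)
      exact ⟨n, hnW, by omega⟩
    obtain ⟨n0, -, hn0W⟩ := h' 0
    set v0 := listPref b n0 with hv0
    have hst0 : StableNode t col v0 := hn0W.1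
    set c := sInf (ColorsFrom t col v0) with hc
    have hcinf : {n | col (listPref b n) = c}.Infinite := by
      apply Set.Infinite.mono ?_ (hIinf.diff (Set.finite_Iio n0))
      rintro n ⟨hnI, hn0⟩
      simp only [Set.mem_Iio, not_lt] at hn0
      have hpre : v0 <+: listPref b n := by
        rw [hv0]; exact listPref_prefix b hn0
      have hnode : listPref b n ∈ t.nodes := hbr n
      have := (stable_mono t col hst0 hnode hpre).2
      have hcol' : col (listPref b n) = sInf (ColorsFrom t col (listPref b n)) := hnI.2
      rw [Set.mem_setOf_eq, hcol', this]
    have hpre0 : listPref b v0.length = v0 := by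
      rw [hv0, length_listPref]
    have := parity_sInf t col hbr hpre0 hst0 hcinf
    apply hnp
    refine ⟨hbr, ?_⟩
    unfold ParityBranch
    rw [this]
    exact hE v0 hst0

theorem evenMin_of_large (t : DTree D) (col : List D → ℕ)
    (hL : LargeT t {b | IsBranch t b ∧ ParityBranch col b}) : EvenMin t col := by
  intro u hst
  by_contra hodd
  obtain ⟨f, hnwd, hsub⟩ := hL
  set c := sInf (ColorsFrom t col u) with hc
  have hcmem : c ∈ ColorsFrom t col u := Nat.sInf_mem (colorsFrom_nonempty t col hst.1)
  have hstep : ∀ (n : ℕ) (w : List D), (w ∈ t.nodes ∧ u <+: w) →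
      ∃ w', (w' ∈ t.nodes ∧ u <+: w') ∧
        ∃ a, a ∈ t.nodes ∧ w <+: a ∧ (∀ b ∈ f n, listPref b a.length ≠ a) ∧
          a <+: w' ∧ a.length < w'.length ∧ col w' = c := by
    rintro n w ⟨hw, huw⟩
    obtain ⟨a, ha, hwa, havoid⟩ := hnwd n w hw
    obtain ⟨d, hd⟩ := t.no_leaf a ha
    have huad : u <+: a ++ [d] := (huw.trans hwa).trans (List.prefix_append _ _)
    have hceq := (stable_mono t col hst hd huad).2
    have : c ∈ ColorsFrom t col (a ++ [d]) := by rw [hceq]; exact hcmem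
    obtain ⟨w', hw', hadw', hcw'⟩ := this
    have hlen : a.length < w'.length := by
      have := hadw'.length_le; simp at this; omega
    exact ⟨w', ⟨hw', huad.trans hadw'⟩, a, ha, hwa, havoid,
      (List.prefix_append _ _).trans hadw', hlen, hcw'⟩
  obtain ⟨v, hv0, hInv, hP⟩ := exists_chain _ _ u ⟨hst.1, List.prefix_refl u⟩ hstep
  choose aseq hanode hva havoid hav hlen hcolc using hP
  have hchain : ∀ n, v n <+: v (n + 1) := fun n => (hva n).trans (hav n)
  have hlens : ∀ n, (v n).length < (v (n + 1)).length := fun n =>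
    lt_of_le_of_lt (hva n).length_le (hlen n)
  obtain ⟨b, hbr, hpref⟩ := exists_limit_branch t hchain hlens (fun n => (hInv n).1)
  have hapref : ∀ n, listPref b (aseq n).length = aseq n := by
    intro n
    apply eq_listPref_of_prefix (n := (v (n + 1)).length)
    rw [hpref (n + 1)]
    exact hav n
  have hnotin : ∀ n, b ∉ f n := fun n hbf => havoid n b hbf (hapref n)
  have hpre0 : listPref b u.length = u := by rw [← hv0]; exact hpref 0
  have hcinf : {n | col (listPref b n) = c}.Infinite := by
    apply Set.infinite_of_injective_forall_mem
      (f := fun n => (v (n + 1)).length)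
    · exact (strictMono_nat_of_lt_succ fun n => hlens (n + 1)).injective
    · intro n
      rw [Set.mem_setOf_eq, hpref (n + 1)]
      exact hcolc n
  have hsinf := parity_sInf t col hbr hpre0 hst hcinf
  have hbmem : b ∈ {b | IsBranch t b ∧ ParityBranch col b} → False := by
    rintro ⟨-, hp⟩
    unfold ParityBranch at hp
    rw [hsinf] at hp
    exact hodd hp
  have : b ∈ ⋃ n, f n := hsub ⟨hbr, fun hp => hbmem hp⟩
  obtain ⟨s, ⟨n, rfl⟩, hbs⟩ := this
  exact hnotin n hbs

/-! ### Follows machinery -/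

theorem dirs_node (t : DTree D) {φ : List D → D × Bool}
    (h1 : ∀ u ∈ t.nodes, u ++ [(φ u).1] ∈ t.nodes)
    {u : List D} (hu : u ∈ t.nodes) {l : List D}
    (hl : ∀ i : Fin l.length, l.get i = (φ (u ++ l.take i.1)).1) :
    u ++ l ∈ t.nodes := by
  suffices h : ∀ k, k ≤ l.length → u ++ l.take k ∈ t.nodes by
    have := h l.length le_rfl
    rwa [List.take_length] at this
  intro k hk
  induction k with
  | zero => simpa using hu
  | succ k ih =>
    have hk' : k < l.length := hk
    have hnode := h1 (u ++ l.take k) (ih hk'.le)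
    have hget : (φ (u ++ l.take k)).1 = l.get ⟨k, hk'⟩ := (hl ⟨k, hk'⟩).symm
    rw [hget] at hnode
    rw [← List.take_concat_get hk', List.concat_eq_append, ← List.append_assoc]
    exact hnode

theorem exists_followsShortest {φ : List D → D × Bool} {u v0 : List D}
    (h : Follows φ u v0) : ∃ v, FollowsShortest φ u v := by
  obtain ⟨l0, hv0, hd0, hf0⟩ := h
  set S : Set ℕ := {n | ∃ l : List D, l.length = n ∧
    (∀ i : Fin l.length, l.get i = (φ (u ++ l.take i.1)).1) ∧
    (φ (u ++ l)).2 = true} with hS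
  have hSne : S.Nonempty := ⟨l0.length, l0, rfl, hd0, by rw [← hv0]; exact hf0⟩
  obtain ⟨l, hlen, hdir, hflag⟩ := Nat.sInf_mem hSne
  refine ⟨u ++ l, l, rfl, hdir, hflag, ?_⟩
  intro l' hpre hne
  by_contra hfl
  have hflag' : (φ (u ++ l')).2 = true := by
    revert hfl; cases (φ (u ++ l')).2 <;> simp
  have hlt : l'.length < l.length :=
    lt_of_le_of_ne hpre.length_le (fun hh => hne (hpre.eq_of_length hh))
  have hlenle := hpre.length_le
  obtain ⟨r, hr⟩ := hpre
  have hdir' : ∀ i : Fin l'.length, l'.get i = (φ (u ++ l'.take i.1)).1 := by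
    intro i
    have h1 : l'.get i = l.get ⟨i.1, lt_of_lt_of_le i.2 hlenle⟩ := by
      simp only [List.get_eq_getElem]
      exact List.IsPrefix.getElem ⟨r, hr⟩ i.2
    have h2 : l'.take i.1 = l.take i.1 := by
      rw [← hr, List.take_append_of_le_length i.2.le]
    rw [h1, h2]
    exact hdir ⟨i.1, lt_of_lt_of_le i.2 hlenle⟩
  have hmem : l'.length ∈ S := ⟨l', rfl, hdir', hflag'⟩
  have := Nat.sInf_le hmem
  omega

theorem evenMin_of_strategy (t : DTree D) (col : List D → ℕ)
    {φf φn : List D → D × Bool} (hv : ValidLS t φf φn)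
    (hcomp : ∀ b, IsBranch t b → CompatibleBranch φf φn b → ParityBranch col b) :
    EvenMin t col := by
  intro u hst
  set c := sInf (ColorsFrom t col u) with hc
  have hcmem : c ∈ ColorsFrom t col u := Nat.sInf_mem (colorsFrom_nonempty t col hst.1)
  set ψ : ℕ → (List D → D × Bool) := fun n => if n = 0 then φf else φn with hψ
  have hψ0 : ψ 0 = φf := by simp [hψ]
  have hψs : ∀ n, ψ (n + 1) = φn := fun n => by simp [hψ]
  have hψ1 : ∀ n, ∀ u ∈ t.nodes, u ++ [((ψ n) u).1] ∈ t.nodes := by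
    intro n w hw
    cases n with
    | zero => rw [hψ0]; exact (hv.1 w hw).1
    | succ n => rw [hψs]; exact (hv.1 w hw).2
  have hψ2 : ∀ n, ∀ u ∈ t.nodes, ∃ v, Follows (ψ n) u v := by
    intro n w hw
    cases n with
    | zero => rw [hψ0]; exact hv.2.1 w hw
    | succ n => rw [hψs]; exact hv.2.2 w hw
  have hstep : ∀ (n : ℕ) (w : List D), (w ∈ t.nodes ∧ u <+: w) →
      ∃ w', (w' ∈ t.nodes ∧ u <+: w') ∧
        ∃ a, FollowsShortest (ψ n) w a ∧ a ∈ t.nodes ∧ w <+: a ∧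
          a <+: w' ∧ a.length < w'.length ∧ col w' = c := by
    rintro n w ⟨hw, huw⟩
    obtain ⟨a0, hfol0⟩ := hψ2 n w hw
    obtain ⟨a, hfs⟩ := exists_followsShortest hfol0
    obtain ⟨l, hal, hdir, hflag, hmin⟩ := hfs
    have ha : a ∈ t.nodes := by
      rw [hal]; exact dirs_node t (hψ1 n) hw hdir
    have hwa : w <+: a := by rw [hal]; exact List.prefix_append _ _
    obtain ⟨d, hd⟩ := t.no_leaf a ha
    have huad : u <+: a ++ [d] := (huw.trans hwa).trans (List.prefix_append _ _)
    have hceq := (stable_mono t col hst hd huad).2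
    have : c ∈ ColorsFrom t col (a ++ [d]) := by rw [hceq]; exact hcmem
    obtain ⟨w', hw', hadw', hcw'⟩ := this
    have hlenlt : a.length < w'.length := by
      have := hadw'.length_le; simp at this; omega
    exact ⟨w', ⟨hw', huad.trans hadw'⟩, a, ⟨l, hal, hdir, hflag, hmin⟩, ha, hwa,
      (List.prefix_append _ _).trans hadw', hlenlt, hcw'⟩
  obtain ⟨useq, hu0, hInv, hP⟩ := exists_chain _ _ u ⟨hst.1, List.prefix_refl u⟩ hstep
  choose vseq hfs hvnode hwv hva hlen hcolc using hP
  have hchain : ∀ n, useq n <+: useq (n + 1) := fun n => (hwv n).trans (hva n)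
  have hlens : ∀ n, (useq n).length < (useq (n + 1)).length := fun n =>
    lt_of_le_of_lt (hwv n).length_le (hlen n)
  obtain ⟨b, hbr, hpref⟩ := exists_limit_branch t hchain hlens (fun n => (hInv n).1)
  have hvpref : ∀ n, listPref b (vseq n).length = vseq n := by
    intro n
    apply eq_listPref_of_prefix (n := (useq (n + 1)).length)
    rw [hpref (n + 1)]
    exact hva n
  have hcompat : CompatibleBranch φf φn b := by
    refine ⟨useq, vseq, hpref, hvpref, ?_, ?_, ?_⟩
    · have := hfs 0
      rwa [hψ0] at this
    · intro n
      have := hfs (n + 1)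
      rwa [hψs] at this
    · intro n
      refine ⟨hva n, fun he => ?_⟩
      have := hlen n
      rw [he] at this
      omega
  have hp := hcomp b hbr hcompat
  have hpre0 : listPref b u.length = u := by rw [← hu0]; exact hpref 0
  have hcinf : {n | col (listPref b n) = c}.Infinite := by
    apply Set.infinite_of_injective_forall_mem (f := fun n => (useq (n + 1)).length)
    · exact (strictMono_nat_of_lt_succ fun n => hlens (n + 1)).injective
    · intro n
      rw [Set.mem_setOf_eq, hpref (n + 1)]
      exact hcolc n
  have hsinf := parity_sInf t col hbr hpre0 hst hcinf
  unfold ParityBranch at hp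
  rwa [hsinf] at hp

end Stmt12Aux
namespace Stmt12Aux

variable {D : Type}

/-! ### subtree encodings and the canonical local strategy -/

open Classical in
/-- Encoding of the coloured subtree rooted at `u`. -/
noncomputable def encT (t : DTree D) (col : List D → ℕ) (u : List D) : Set (List D) × (List D → ℕ) :=
  ({w | u ++ w ∈ t.nodes}, fun w => if u ++ w ∈ t.nodes then col (u ++ w) else 0)

/-- Shifting an encoded subtree to the subtree rooted at `x`. -/
def shiftP (p : Set (List D) × (List D → ℕ)) (x : List D) : Set (List D) × (List D → ℕ) :=
  ({w | x ++ w ∈ p.1}, fun w => p.2 (x ++ w))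

theorem encT_append (t : DTree D) (col : List D → ℕ) (u x : List D) :
    encT t col (u ++ x) = shiftP (encT t col u) x := by
  apply Prod.ext
  · ext w; simp [encT, shiftP, List.append_assoc]
  · funext w
    classical
    have : (u ++ x) ++ w = u ++ (x ++ w) := List.append_assoc u x w
    show (encT t col (u ++ x)).2 w = (encT t col u).2 (x ++ w)
    unfold encT
    simp only []
    rw [this]

theorem shiftP_nil (p : Set (List D) × (List D → ℕ)) : shiftP p [] = p := by
  apply Prod.ext
  · ext w; simp [shiftP]
  · funext w; simp [shiftP]

theorem shiftP_shiftP (p : Set (List D) × (List D → ℕ)) (x y : List D) :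
    shiftP (shiftP p x) y = shiftP p (x ++ y) := by
  apply Prod.ext
  · ext w; simp [shiftP, List.append_assoc]
  · funext w; simp [shiftP, List.append_assoc]

def colorsP (p : Set (List D) × (List D → ℕ)) : Set ℕ := {c | ∃ w ∈ p.1, p.2 w = c}

def stableP (p : Set (List D) × (List D → ℕ)) : Prop :=
  [] ∈ p.1 ∧ ∀ x ∈ p.1, colorsP (shiftP p x) = colorsP p

def goodP (p : Set (List D) × (List D → ℕ)) : Prop :=
  stableP p ∧ p.2 [] = sInf (colorsP p)

noncomputable def distP (p : Set (List D) × (List D → ℕ)) : ℕ :=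
  sInf {n | ∃ x : List D, x.length = n ∧ goodP (shiftP p x)}

theorem encT_snd_pos (t : DTree D) (col : List D → ℕ) {u w : List D}
    (hw : u ++ w ∈ t.nodes) : (encT t col u).2 w = col (u ++ w) := by
  simp [encT, hw]

theorem colorsP_encT (t : DTree D) (col : List D → ℕ) (u : List D) :
    colorsP (encT t col u) = ColorsFrom t col u := by
  ext c
  constructor
  · rintro ⟨w, hw, hc⟩
    have hw' : u ++ w ∈ t.nodes := hw
    rw [encT_snd_pos t col hw'] at hc
    exact ⟨u ++ w, hw', List.prefix_append _ _, hc⟩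
  · rintro ⟨v, hv, ⟨w, rfl⟩, hc⟩
    exact ⟨w, hv, by rw [encT_snd_pos t col hv]; exact hc⟩

theorem mem_encT (t : DTree D) (col : List D → ℕ) (u w : List D) :
    w ∈ (encT t col u).1 ↔ u ++ w ∈ t.nodes := Iff.rfl

theorem stableP_encT (t : DTree D) (col : List D → ℕ) (u : List D) :
    stableP (encT t col u) ↔ StableNode t col u := by
  constructor
  · rintro ⟨h0, h⟩
    refine ⟨by simpa using (mem_encT t col u []).mp h0, fun w hw huw => ?_⟩
    obtain ⟨x, rfl⟩ := huw
    have hx : x ∈ (encT t col u).1 := (mem_encT t col u x).mpr hw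
    have := h x hx
    rwa [← encT_append, colorsP_encT, colorsP_encT] at this
  · rintro ⟨h0, h⟩
    refine ⟨(mem_encT t col u []).mpr (by simpa using h0), fun x hx => ?_⟩
    rw [← encT_append, colorsP_encT, colorsP_encT]
    exact h (u ++ x) ((mem_encT t col u x).mp hx) (List.prefix_append _ _)

theorem goodP_encT (t : DTree D) (col : List D → ℕ) {u : List D} (hu : u ∈ t.nodes) :
    goodP (encT t col u) ↔ (StableNode t col u ∧ col u = sInf (ColorsFrom t col u)) := by
  unfold goodP
  rw [stableP_encT, colorsP_encT]
  have h2 : (encT t col u).2 [] = col u := by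
    have h3 : u ++ ([] : List D) ∈ t.nodes := by simpa using hu
    rw [encT_snd_pos t col h3]
    simp
  rw [h2]

theorem goodP_shift_node (t : DTree D) (col : List D → ℕ) {u x : List D}
    (h : goodP (shiftP (encT t col u) x)) : u ++ x ∈ t.nodes := by
  have h0 := h.1.1
  simp only [shiftP, mem_encT, Set.mem_setOf_eq] at h0
  simpa using h0

open Classical in
/-- The canonical local strategy, as a function of the encoded subtree. -/
noncomputable def Fc [Nonempty D] (p : Set (List D) × (List D → ℕ)) : D × Bool :=
  (if goodP p then
     (if h : ∃ d : D, [d] ∈ p.1 then h.choose else Classical.arbitrary D)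
   else
     (if h : ∃ x : List D, x ≠ [] ∧ x.length = distP p ∧ goodP (shiftP p x) then
        h.choose.headD (Classical.arbitrary D)
      else Classical.arbitrary D),
   if goodP p then true else false)

theorem Fc_flag [Nonempty D] (p : Set (List D) × (List D → ℕ)) :
    (Fc p).2 = true ↔ goodP p := by
  classical
  constructor
  · intro h
    by_contra hg
    simp only [Fc, if_neg hg] at h
    exact Bool.false_ne_true h
  · intro hg
    simp only [Fc, if_pos hg]

theorem dist_mem (t : DTree D) (col : List D → ℕ) (hcol : (col '' t.nodes).Finite)
    {u : List D} (hu : u ∈ t.nodes) :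
    ∃ x : List D, x.length = distP (encT t col u) ∧ goodP (shiftP (encT t col u) x) := by
  obtain ⟨v, hv, ⟨x, rfl⟩, hstv, hcv⟩ := exists_min_node t col hcol hu
  have hx : goodP (shiftP (encT t col u) x) := by
    rw [← encT_append]
    exact (goodP_encT t col hv).mpr ⟨hstv, hcv⟩
  have hne : {n | ∃ x : List D, x.length = n ∧ goodP (shiftP (encT t col u) x)}.Nonempty :=
    ⟨x.length, x, rfl, hx⟩
  exact Nat.sInf_mem hne

theorem Fc_spec [Nonempty D] (t : DTree D) (col : List D → ℕ)
    (hcol : (col '' t.nodes).Finite) {u : List D} (hu : u ∈ t.nodes) :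
    u ++ [(Fc (encT t col u)).1] ∈ t.nodes ∧
    (¬ goodP (encT t col u) →
      distP (encT t col (u ++ [(Fc (encT t col u)).1])) < distP (encT t col u)) := by
  classical
  by_cases hg : goodP (encT t col u)
  · have hex : ∃ d : D, [d] ∈ (encT t col u).1 := by
      obtain ⟨d, hd⟩ := t.no_leaf u hu
      exact ⟨d, (mem_encT t col u [d]).mpr hd⟩
    have h1 : (Fc (encT t col u)).1 = hex.choose := by
      simp only [Fc, if_pos hg, dif_pos hex]
    refine ⟨?_, fun h => absurd hg h⟩
    rw [h1]
    exact (mem_encT t col u [hex.choose]).mp hex.choose_spec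
  · obtain ⟨x0, hx0len, hx0good⟩ := dist_mem t col hcol hu
    have hx0ne : x0 ≠ [] := by
      rintro rfl
      rw [shiftP_nil] at hx0good
      exact hg hx0good
    have hex : ∃ x : List D, x ≠ [] ∧ x.length = distP (encT t col u) ∧
        goodP (shiftP (encT t col u) x) := ⟨x0, hx0ne, hx0len, hx0good⟩
    have h1 : (Fc (encT t col u)).1 = hex.choose.headD (Classical.arbitrary D) := by
      simp only [Fc, if_neg hg, dif_pos hex]
    obtain ⟨hne, hlen, hgood⟩ := hex.choose_spec
    obtain ⟨d, x', hx⟩ := List.exists_cons_of_ne_nil hne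
    have hd1 : (Fc (encT t col u)).1 = d := by rw [h1, hx]; rfl
    have hxnode : u ++ hex.choose ∈ t.nodes := goodP_shift_node t col hgood
    constructor
    · rw [hd1]
      apply t.prefix_closed ?_ hxnode
      rw [hx]
      exact ⟨x', by simp⟩
    · intro _
      rw [hd1]
      have hshift : goodP (shiftP (encT t col (u ++ [d])) x') := by
        rw [encT_append, shiftP_shiftP]
        have : [d] ++ x' = hex.choose := by rw [hx]; rfl
        rw [this]
        exact hgood
      have hle : distP (encT t col (u ++ [d])) ≤ x'.length :=
        Nat.sInf_le ⟨x', rfl, hshift⟩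
      have hxl : x'.length < distP (encT t col u) := by
        rw [← hlen, hx]
        simp
      omega

theorem Fc_follows [Nonempty D] (t : DTree D) (col : List D → ℕ)
    (hcol : (col '' t.nodes).Finite) :
    ∀ u ∈ t.nodes, ∃ v, Follows (fun u => Fc (encT t col u)) u v := by
  set φ : List D → D × Bool := fun u => Fc (encT t col u) with hφ
  suffices h : ∀ N, ∀ u, u ∈ t.nodes → distP (encT t col u) ≤ N → ∃ v, Follows φ u v by
    intro u hu
    exact h _ u hu le_rfl
  intro N
  induction N with
  | zero =>
    intro u hu hN
    have hg : goodP (encT t col u) := by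
      obtain ⟨x, hxl, hxg⟩ := dist_mem t col hcol hu
      have hx0 : x = [] := List.length_eq_zero_iff.mp (by omega)
      rw [hx0, shiftP_nil] at hxg
      exact hxg
    refine ⟨u, [], by simp, fun i => Fin.elim0 i, ?_⟩
    exact (Fc_flag _).mpr hg
  | succ N ih =>
    intro u hu hN
    by_cases hg : goodP (encT t col u)
    · exact ⟨u, [], by simp, fun i => Fin.elim0 i, (Fc_flag _).mpr hg⟩
    · obtain ⟨hchild, hdist⟩ := Fc_spec t col hcol hu
      set d : D := (φ u).1 with hd
      obtain ⟨v, l', hvl, hdir', hfl'⟩ := ih (u ++ [d]) hchild (by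
        have := hdist hg
        omega)
      refine ⟨v, d :: l', ?_, ?_, hfl'⟩
      · rw [hvl]
        simp
      · rintro ⟨i, hi⟩
        cases i with
        | zero =>
          simp [hd]
        | succ i =>
          have hi' : i < l'.length := by simpa using hi
          have := hdir' ⟨i, hi'⟩
          simp only [List.get_eq_getElem, List.getElem_cons_succ, List.take_succ_cons]
          simp only [List.get_eq_getElem] at this
          rw [this]
          congr 1
          simp [List.append_assoc]

theorem encT_eq_of_subtreeEq (t : DTree D) (col : List D → ℕ) {u₁ u₂ : List D}
    (h : SubtreeEq t col u₁ u₂) : encT t col u₁ = encT t col u₂ := by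
  obtain ⟨h1, h2⟩ := h
  apply Prod.ext
  · ext w
    exact h1 w
  · funext w
    by_cases hw : u₁ ++ w ∈ t.nodes
    · have hw2 : u₂ ++ w ∈ t.nodes := (h1 w).mp hw
      simp only [encT, if_pos hw, if_pos hw2]
      exact h2 w hw
    · have hw2 : u₂ ++ w ∉ t.nodes := fun hh => hw ((h1 w).mpr hh)
      simp only [encT, if_neg hw, if_neg hw2]

theorem strategy_of_evenMin [Nonempty D] (t : DTree D) (col : List D → ℕ)
    (hcol : (col '' t.nodes).Finite) (hE : EvenMin t col) :
    ValidLS t (fun u => Fc (encT t col u)) (fun u => Fc (encT t col u)) ∧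
    ∀ b, IsBranch t b → CompatibleBranch (fun u => Fc (encT t col u))
      (fun u => Fc (encT t col u)) b → ParityBranch col b := by
  set φ : List D → D × Bool := fun u => Fc (encT t col u) with hφ
  have hvalid : ValidLS t φ φ := by
    refine ⟨fun u hu => ⟨(Fc_spec t col hcol hu).1, (Fc_spec t col hcol hu).1⟩, ?_, ?_⟩
    · exact Fc_follows t col hcol
    · exact Fc_follows t col hcol
  refine ⟨hvalid, ?_⟩
  intro b hb hcompat
  obtain ⟨useq, vseq, hupref, hvpref, hfs0, hfsn, hlt⟩ := hcompat
  have hvnode : ∀ n, vseq n ∈ t.nodes := by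
    intro n
    rw [← hvpref n]
    exact hb _
  have hflag : ∀ n, (φ (vseq n)).2 = true := by
    intro n
    cases n with
    | zero => obtain ⟨l, -, -, hf, -⟩ := hfs0; exact hf
    | succ n => obtain ⟨l, -, -, hf, -⟩ := hfsn n; exact hf
  have hgood : ∀ n, StableNode t col (vseq n) ∧
      col (vseq n) = sInf (ColorsFrom t col (vseq n)) := by
    intro n
    exact (goodP_encT t col (hvnode n)).mp ((Fc_flag _).mp (hflag n))
  have hlelen : ∀ n, (vseq n).length < (vseq (n + 1)).length := by
    intro n
    have h1 : (vseq n).length < (useq (n + 1)).length := by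
      rcases hlt n with ⟨hp, hne⟩
      rcases lt_or_eq_of_le hp.length_le with h | h
      · exact h
      · exact absurd (hp.eq_of_length h) hne
    have h2 : (useq (n + 1)).length ≤ (vseq (n + 1)).length := by
      obtain ⟨l, hv, -, -, -⟩ := hfsn n
      rw [hv]
      simp
    omega
  have hmono : StrictMono fun n => (vseq n).length :=
    strictMono_nat_of_lt_succ hlelen
  have hv0n : ∀ n, vseq 0 <+: vseq n := by
    intro n
    have h1 : listPref b (vseq 0).length <+: listPref b (vseq n).length :=
      listPref_prefix b (hmono.le_iff_le.mpr (Nat.zero_le n))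
    rwa [hvpref 0, hvpref n] at h1
  set c := sInf (ColorsFrom t col (vseq 0)) with hc
  have hceq : ∀ n, col (vseq n) = c := by
    intro n
    have := (stable_mono t col (hgood 0).1 (hvnode n) (hv0n n)).2
    rw [(hgood n).2, this]
  have hcinf : {n | col (listPref b n) = c}.Infinite := by
    apply Set.infinite_of_injective_forall_mem (f := fun n => (vseq n).length)
    · exact hmono.injective
    · intro n
      rw [Set.mem_setOf_eq, hvpref n]
      exact hceq n
  have hsinf := parity_sInf t col hb (hvpref 0) (hgood 0).1 hcinf
  unfold ParityBranch
  rw [hsinf]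
  exact hE (vseq 0) (hgood 0).1

end Stmt12Aux
/-- The set of branches of a coloured `D`-tree satisfying the
parity condition is large iff there is a valid local-strategy `(φ_f, φ_n)` all of
whose compatible branches satisfy the parity condition; moreover the
local-strategy can be chosen invariant under equality of coloured subtrees. -/
theorem stmt12 {D : Type} [Countable D] (t : DTree D) (col : List D → ℕ)
    (hcol : (col '' t.nodes).Finite) :
    (LargeT t {b | IsBranch t b ∧ ParityBranch col b} ↔
      ∃ φf φn : List D → D × Bool, ValidLS t φf φn ∧
        ∀ b, IsBranch t b → CompatibleBranch φf φn b → ParityBranch col b) ∧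
    (LargeT t {b | IsBranch t b ∧ ParityBranch col b} →
      ∃ φf φn : List D → D × Bool, ValidLS t φf φn ∧
        (∀ b, IsBranch t b → CompatibleBranch φf φn b → ParityBranch col b) ∧
        ∀ u₁ ∈ t.nodes, ∀ u₂ ∈ t.nodes, SubtreeEq t col u₁ u₂ →
          φf u₁ = φf u₂ ∧ φn u₁ = φn u₂) := by
  classical
  obtain ⟨d0, -⟩ := t.no_leaf [] t.root_mem
  haveI : Nonempty D := ⟨d0⟩
  constructor
  · constructor
    · intro hL
      have hE := Stmt12Aux.evenMin_of_large t col hL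
      obtain ⟨hvalid, hpar⟩ := Stmt12Aux.strategy_of_evenMin t col hcol hE
      exact ⟨_, _, hvalid, hpar⟩
    · rintro ⟨φf, φn, hv, hcomp⟩
      exact Stmt12Aux.large_of_evenMin t col hcol
        (Stmt12Aux.evenMin_of_strategy t col hv hcomp)
  · intro hL
    have hE := Stmt12Aux.evenMin_of_large t col hL
    obtain ⟨hvalid, hpar⟩ := Stmt12Aux.strategy_of_evenMin t col hcol hE
    refine ⟨_, _, hvalid, hpar, ?_⟩
    intro u₁ _ u₂ _ hsub
    have h := Stmt12Aux.encT_eq_of_subtreeEq t col hsub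
    exact ⟨congrArg Stmt12Aux.Fc h, congrArg Stmt12Aux.Fc h⟩
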